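/- Let R be a ring and F : ModuleCat R ⥤ Ab an additive functor that is half-exact. Let B be an R-module with projective resolution ⋯ → P₁ → P₀ → B → 0, and for j ≥ 1 let ΩʲB denote the j-th syzygy (Ω⁰B = B, ΩʲB = ker(Pⱼ₋₁ ↠ Ωʲ⁻¹B)), so there are canonical epimorphisms Pⱼ ↠ ΩʲB and monomorphisms ΩʲB ↪ Pⱼ₋₁. Then the long sequence of abelian groups ⋯ → H₂(F(P_•)) → ker(F(Ω²B) → F(P₁)) → coker(F(P₂) → F(Ω²B)) → H₁(F(P_•)) → ker(F(ΩB) → F(P₀)) → coker(F(P₁) → F(ΩB)) → H₀(F(P_•)) → F(B) → coker(F(P₀) → F(B)) → 0, in which Hⱼ(F(P_•)) denotes the homology of the chain complex ⋯ → F(P₁) → F(P₀) at F(Pⱼ) and all maps are the canonically induced ones, is exact. -/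

import Mathlib

open CategoryTheory Limits

set_option linter.unusedSectionVars false

namespace LeftFundamentalSeq

universe u v w

/-- The data of a projective resolution `⋯ → P₁ → P₀ → B → 0` of the module `B = S 0`
together with its syzygies `S j = Ωʲ B`, encoded by composable pairs
`Ωʲ⁺¹ B →(m j) Pⱼ →(p j) Ωʲ B` with `m j ≫ p j = 0` (each such pair is required to be a
short exact sequence in the main theorem). -/
structure SyzygyData (R : Type u) [Ring R] where
  /-- the syzygy modules, `S 0` being the given module `B` -/
  S : ℕ → ModuleCat.{v} R
  /-- the modules of the projective resolution -/
  P : ℕ → ModuleCat.{v} R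
  /-- the canonical monomorphisms `Ωʲ⁺¹ B ↪ Pⱼ` -/
  m : ∀ j, S (j + 1) ⟶ P j
  /-- the canonical epimorphisms `Pⱼ ↠ Ωʲ B` -/
  p : ∀ j, P j ⟶ S j
  wmp : ∀ j, m j ≫ p j = 0

variable {R : Type u} [Ring R]
variable (F : ModuleCat.{v} R ⥤ AddCommGrpCat.{w}) [F.Additive] (D : SyzygyData.{u, v} R)

namespace SyzygyData

/-- The differential `Pⱼ⁺¹ ⟶ Pⱼ` of the projective resolution. -/
def d (j : ℕ) : D.P (j + 1) ⟶ D.P j := D.p (j + 1) ≫ D.m j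

lemma d_comp_d (j : ℕ) : D.d (j + 1) ≫ D.d j = 0 := by
  show (D.p (j + 2) ≫ D.m (j + 1)) ≫ D.p (j + 1) ≫ D.m j = 0
  rw [Category.assoc, reassoc_of% (D.wmp (j + 1)), zero_comp, comp_zero]

end SyzygyData

/-- `K j = ker (F(Ωʲ⁺¹ B) → F(Pⱼ))`. -/
noncomputable def K (j : ℕ) : AddCommGrpCat.{w} := kernel (F.map (D.m j))

/-- `Cok j = coker (F(Pⱼ) → F(Ωʲ B))`. -/
noncomputable def Cok (j : ℕ) : AddCommGrpCat.{w} := cokernel (F.map (D.p j))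

/-- The cycles `Z j = ker (F(Pⱼ⁺¹) → F(Pⱼ))` of the chain complex `F(P_•)`. -/
noncomputable def Z (j : ℕ) : AddCommGrpCat.{w} := kernel (F.map (D.d j))

/-- The lift `ℓ j : F(Pⱼ⁺²) ⟶ Z j` of the differential `F(dⱼ₊₁)`. -/
noncomputable def l (j : ℕ) : F.obj (D.P (j + 2)) ⟶ Z F D j :=
  kernel.lift _ (F.map (D.d (j + 1))) (by
    rw [← F.map_comp, D.d_comp_d, F.map_zero])

/-- The homology `Hⱼ(F(P_•))` of the chain complex `⋯ → F(P₁) → F(P₀)` at `F(Pⱼ)`: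
`H 0 = coker(F(P₁) → F(P₀))` and `H (j+1) = Z j / im F(Pⱼ₊₂)`. -/
noncomputable def H : ℕ → AddCommGrpCat.{w}
  | 0 => cokernel (F.map (D.d 0))
  | (j + 1) => cokernel (l F D j)

/-- The canonical map `F(Ωʲ⁺² B) ⟶ Z j` induced by `F(m (j+1))`. -/
noncomputable def zmap (j : ℕ) : F.obj (D.S (j + 2)) ⟶ Z F D j :=
  kernel.lift _ (F.map (D.m (j + 1))) (by
    rw [← F.map_comp]
    show F.map (D.m (j + 1) ≫ D.p (j + 1) ≫ D.m j) = 0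
    rw [reassoc_of% (D.wmp (j + 1)), zero_comp, F.map_zero])

lemma comp_zmap (j : ℕ) : F.map (D.p (j + 2)) ≫ zmap F D j = l F D j := by
  apply (cancel_mono (kernel.ι (F.map (D.d j)))).1
  erw [Category.assoc, zmap, kernel.lift_ι, l, kernel.lift_ι, ← F.map_comp]
  rfl

/-- The canonical map `coker(F(Pⱼ₊₁) → F(Ωʲ⁺¹ B)) ⟶ Hⱼ(F(P_•))`. -/
noncomputable def toH : ∀ j, Cok F D (j + 1) ⟶ H F D j
  | 0 => cokernel.desc (F.map (D.p 1)) (F.map (D.m 0) ≫ cokernel.π (F.map (D.d 0))) (by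
      erw [← Category.assoc, ← F.map_comp]
      exact cokernel.condition _)
  | (j + 1) => cokernel.desc (F.map (D.p (j + 2))) (zmap F D j ≫ cokernel.π (l F D j)) (by
      erw [← Category.assoc, comp_zmap, cokernel.condition] <;> rfl)

/-- The canonical map `H₀(F(P_•)) ⟶ F(B)` induced by `F(p 0)`. -/
noncomputable def fromH0 : H F D 0 ⟶ F.obj (D.S 0) :=
  cokernel.desc (F.map (D.d 0)) (F.map (D.p 0)) (by
    erw [← F.map_comp]
    show F.map ((D.p 1 ≫ D.m 0) ≫ D.p 0) = 0
    erw [Category.assoc, D.wmp 0, comp_zero, F.map_zero])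

/-- The canonical projection `F(B) ⟶ coker(F(P₀) → F(B))`. -/
noncomputable def π0 : F.obj (D.S 0) ⟶ Cok F D 0 := cokernel.π (F.map (D.p 0))

/-- The canonical map `ker(F(Ωʲ⁺¹B) → F(Pⱼ)) ⟶ coker(F(Pⱼ₊₁) → F(Ωʲ⁺¹B))`. -/
noncomputable def fromK (j : ℕ) : K F D j ⟶ Cok F D (j + 1) :=
  kernel.ι (F.map (D.m j)) ≫ cokernel.π (F.map (D.p (j + 1)))

/-- The canonical map `Z j ⟶ K j` induced by `F(p (j+1))`. -/
noncomputable def toK (j : ℕ) : Z F D j ⟶ K F D j :=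
  kernel.lift _ (kernel.ι (F.map (D.d j)) ≫ F.map (D.p (j + 1))) (by
    erw [Category.assoc, ← F.map_comp]
    exact kernel.condition _)

/-- The connecting map `Hⱼ₊₁(F(P_•)) ⟶ ker(F(Ωʲ⁺¹B) → F(Pⱼ))`, induced by the universal
properties of kernels and cokernels. -/
noncomputable def conn (j : ℕ) : H F D (j + 1) ⟶ K F D j :=
  cokernel.desc (l F D j) (toK F D j) (by
    apply (cancel_mono (kernel.ι (F.map (D.m j)))).1
    erw [Category.assoc, zero_comp]
    show l F D j ≫ toK F D j ≫ kernel.ι _ = 0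
    erw [toK, kernel.lift_ι, ← Category.assoc, l, kernel.lift_ι, ← F.map_comp]
    show F.map ((D.p (j + 2) ≫ D.m (j + 1)) ≫ D.p (j + 1)) = 0
    erw [Category.assoc, D.wmp (j + 1), comp_zero, F.map_zero])

lemma w₁ : fromH0 F D ≫ π0 F D = 0 := by
  apply (cancel_epi (cokernel.π (F.map (D.d 0)))).1
  erw [comp_zero, ← Category.assoc, fromH0, cokernel.π_desc, π0, cokernel.condition] <;> rfl

lemma w₂ : toH F D 0 ≫ fromH0 F D = 0 := by
  apply (cancel_epi (cokernel.π (F.map (D.p 1)))).1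
  erw [comp_zero, ← Category.assoc, toH, cokernel.π_desc, Category.assoc, fromH0,
    cokernel.π_desc, ← F.map_comp, D.wmp 0, F.map_zero]

lemma w₃ : ∀ j, fromK F D j ≫ toH F D j = 0
  | 0 => by
      erw [fromK, Category.assoc, toH, cokernel.π_desc, ← Category.assoc,
        kernel.condition, zero_comp]
  | (j + 1) => by
      erw [fromK, Category.assoc, toH, cokernel.π_desc, ← Category.assoc]
      have h : kernel.ι (F.map (D.m (j + 1))) ≫ zmap F D j = 0 := by
        apply (cancel_mono (kernel.ι (F.map (D.d j)))).1
        erw [Category.assoc, zmap, kernel.lift_ι, kernel.condition, zero_comp]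
      erw [h, zero_comp]

lemma w₄ (j : ℕ) : conn F D j ≫ fromK F D j = 0 := by
  apply (cancel_epi (cokernel.π (l F D j))).1
  erw [comp_zero, ← Category.assoc, conn, cokernel.π_desc, fromK, ← Category.assoc,
    toK, kernel.lift_ι, Category.assoc, cokernel.condition, comp_zero]

lemma w₅ (j : ℕ) : toH F D (j + 1) ≫ conn F D j = 0 := by
  apply (cancel_epi (cokernel.π (F.map (D.p (j + 2))))).1
  erw [comp_zero, ← Category.assoc, toH, cokernel.π_desc, Category.assoc, conn,
    cokernel.π_desc]
  apply (cancel_mono (kernel.ι (F.map (D.m j)))).1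
  erw [Category.assoc, zero_comp]
  show zmap F D j ≫ toK F D j ≫ kernel.ι _ = 0
  erw [toK, kernel.lift_ι, ← Category.assoc, zmap, kernel.lift_ι, ← F.map_comp,
    D.wmp (j + 1), F.map_zero]

section AbHelpers

variable {A B : AddCommGrpCat.{w}} (f : A ⟶ B)

lemma ab_comp_apply {A B C : AddCommGrpCat.{w}} (f : A ⟶ B) (g : B ⟶ C) (x : A) :
    (f ≫ g) x = g (f x) := rfl

lemma exists_of_π_eq_zero (y : B) (h : cokernel.π f y = 0) : ∃ x, f x = y := by
  have exa : (ShortComplex.mk f (cokernel.π f) (cokernel.condition f)).Exact :=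
    ShortComplex.exact_of_g_is_cokernel _ (cokernelIsCokernel f)
  exact (ShortComplex.ab_exact_iff _).1 exa y h

lemma π_apply_eq_zero (x : A) : cokernel.π f (f x) = 0 := by
  rw [← ab_comp_apply, cokernel.condition]; rfl

lemma kι_apply_eq_zero (x : (kernel f : AddCommGrpCat.{w})) : f (kernel.ι f x) = 0 := by
  rw [← ab_comp_apply, kernel.condition]; rfl

lemma kι_injective : Function.Injective (kernel.ι f) :=
  (AddCommGrpCat.mono_iff_injective _).1 inferInstance

lemma exists_kernel_lift (y : A) (h : f y = 0) :
    ∃ x : (kernel f : AddCommGrpCat.{w}), kernel.ι f x = y := by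
  have exa : (ShortComplex.mk (kernel.ι f) f (kernel.condition f)).Exact :=
    ShortComplex.exact_of_f_is_kernel _ (kernelIsKernel f)
  exact (ShortComplex.ab_exact_iff _).1 exa y h

lemma π_surjective : Function.Surjective (cokernel.π f) :=
  (AddCommGrpCat.epi_iff_surjective _).1 inferInstance

end AbHelpers

/-- **The left fundamental sequence of a half-exact covariant functor is exact.**
Let `F` be an additive half-exact functor from `R`-modules to abelian groups and
`⋯ → P₁ → P₀ → B → 0` a projective resolution of `B = S 0` with syzygies `Ωʲ B = S j`
(encoded by the short exact sequences `0 → S (j+1) → P j → S j → 0`).  Then the long sequence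
`⋯ → H₂(F(P_•)) → ker(F(Ω²B) → F(P₁)) → coker(F(P₂) → F(Ω²B)) → H₁(F(P_•)) →`
`ker(F(ΩB) → F(P₀)) → coker(F(P₁) → F(ΩB)) → H₀(F(P_•)) → F(B) → coker(F(P₀) → F(B)) → 0`,
with all maps the canonically induced ones, is exact. -/
theorem left_fundamental_sequence_exact
    (hhalf : ∀ ⦃X Y Z : ModuleCat.{v} R⦄ (f : X ⟶ Y) (g : Y ⟶ Z) (w : f ≫ g = 0),
      (ShortComplex.mk f g w).ShortExact →
      (ShortComplex.mk (F.map f) (F.map g)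
        (by rw [← F.map_comp, w, F.map_zero])).Exact)
    (hproj : ∀ j, Projective (D.P j))
    (hres : ∀ j, (ShortComplex.mk (D.m j) (D.p j) (D.wmp j)).ShortExact) :
    Epi (π0 F D) ∧
    (ShortComplex.mk _ _ (w₁ F D)).Exact ∧
    (ShortComplex.mk _ _ (w₂ F D)).Exact ∧
    (∀ j, (ShortComplex.mk _ _ (w₃ F D j)).Exact) ∧
    (∀ j, (ShortComplex.mk _ _ (w₄ F D j)).Exact) ∧
    (∀ j, (ShortComplex.mk _ _ (w₅ F D j)).Exact) := by
  have hex : ∀ j (x : F.obj (D.P j)), F.map (D.p j) x = 0 →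
      ∃ y, F.map (D.m j) y = x := fun j =>
    (ShortComplex.ab_exact_iff _).1 (hhalf (D.m j) (D.p j) (D.wmp j) (hres j))
  have h1 : cokernel.π (F.map (D.d 0)) ≫ fromH0 F D = F.map (D.p 0) :=
    cokernel.π_desc _ _ _
  have h2 : cokernel.π (F.map (D.p 1)) ≫ toH F D 0 =
      F.map (D.m 0) ≫ cokernel.π (F.map (D.d 0)) := cokernel.π_desc _ _ _
  have hconn : ∀ j, cokernel.π (l F D j) ≫ conn F D j = toK F D j :=
    fun j => cokernel.π_desc _ _ _
  have htoK : ∀ j, toK F D j ≫ kernel.ι (F.map (D.m j)) =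
      kernel.ι (F.map (D.d j)) ≫ F.map (D.p (j + 1)) := fun j => kernel.lift_ι _ _ _
  have hzι : ∀ j, zmap F D j ≫ kernel.ι (F.map (D.d j)) = F.map (D.m (j + 1)) :=
    fun j => kernel.lift_ι _ _ _
  have h3 : ∀ j, cokernel.π (F.map (D.p (j + 2))) ≫ toH F D (j + 1) =
      zmap F D j ≫ cokernel.π (l F D j) := fun j => cokernel.π_desc _ _ _
  refine ⟨?_, ?_, ?_, ?_, ?_, ?_⟩
  · show Epi (cokernel.π (F.map (D.p 0)))
    infer_instance
  · -- exactness at F(B)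
    rw [ShortComplex.ab_exact_iff]
    intro y hy
    obtain ⟨x, hx⟩ := exists_of_π_eq_zero (F.map (D.p 0)) y hy
    refine ⟨cokernel.π (F.map (D.d 0)) x, ?_⟩
    have e : (cokernel.π (F.map (D.d 0)) ≫ fromH0 F D) x = y := by rw [h1]; exact hx
    exact e
  · -- exactness at H₀
    rw [ShortComplex.ab_exact_iff]
    intro h hh
    obtain ⟨x, hx⟩ := π_surjective (F.map (D.d 0)) h
    have hx0 : F.map (D.p 0) x = 0 := by
      rw [← h1]
      rw [← hx] at hh
      exact hh
    obtain ⟨s, hs⟩ := hex 0 x hx0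
    refine ⟨cokernel.π (F.map (D.p 1)) s, ?_⟩
    have e2 : cokernel.π (F.map (D.d 0)) (F.map (D.m 0) s) = h := by rw [hs]; exact hx
    have e : (cokernel.π (F.map (D.p 1)) ≫ toH F D 0) s = h := by rw [h2]; exact e2
    exact e
  · -- exactness at Cok (j+1)
    intro j
    rcases j with _ | j
    · rw [ShortComplex.ab_exact_iff]
      intro c hc
      obtain ⟨y, hy⟩ := π_surjective (F.map (D.p 1)) c
      rw [← hy] at hc
      have hc' : cokernel.π (F.map (D.d 0)) (F.map (D.m 0) y) = 0 := by
        have e : (cokernel.π (F.map (D.p 1)) ≫ toH F D 0) y = 0 := hc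
        rw [h2] at e
        exact e
      obtain ⟨x, hx⟩ := exists_of_π_eq_zero (F.map (D.d 0)) _ hc'
      have hdm : F.map (D.m 0) (F.map (D.p 1) x) = F.map (D.m 0) y := by
        have e : (F.map (D.p 1) ≫ F.map (D.m 0)) x = F.map (D.m 0) y := by
          rw [← F.map_comp]
          exact hx
        exact e
      have hd : F.map (D.m 0) (y - F.map (D.p 1) x) = 0 := by
        rw [map_sub, hdm, sub_self]
      obtain ⟨k, hk⟩ := exists_kernel_lift (F.map (D.m 0)) _ hd
      refine ⟨k, ?_⟩
      have e : cokernel.π (F.map (D.p 1)) (kernel.ι (F.map (D.m 0)) k) = c := by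
        rw [hk, map_sub, hy, π_apply_eq_zero]; exact sub_zero _
      exact e
    · rw [ShortComplex.ab_exact_iff]
      intro c hc
      obtain ⟨y, hy⟩ := π_surjective (F.map (D.p (j + 2))) c
      rw [← hy] at hc
      have hc' : cokernel.π (l F D j) (zmap F D j y) = 0 := by
        have e : (cokernel.π (F.map (D.p (j + 2))) ≫ toH F D (j + 1)) y = 0 := hc
        rw [h3 j] at e
        exact e
      obtain ⟨x, hx⟩ := exists_of_π_eq_zero (l F D j) _ hc'
      have hdm : zmap F D j (F.map (D.p (j + 2)) x) = zmap F D j y := by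
        have e : (F.map (D.p (j + 2)) ≫ zmap F D j) x = zmap F D j y := by
          rw [comp_zmap]
          exact hx
        exact e
      have hzero : zmap F D j (y - F.map (D.p (j + 2)) x) = 0 := by
        rw [map_sub, hdm, sub_self]
      have hd : F.map (D.m (j + 1)) (y - F.map (D.p (j + 2)) x) = 0 := by
        have e : (zmap F D j ≫ kernel.ι (F.map (D.d j)))
            (y - F.map (D.p (j + 2)) x) = 0 := by
          have e2 : kernel.ι (F.map (D.d j))
              (zmap F D j (y - F.map (D.p (j + 2)) x)) = 0 := by
            rw [hzero]; exact map_zero _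
          exact e2
        rw [hzι j] at e
        exact e
      obtain ⟨k, hk⟩ := exists_kernel_lift (F.map (D.m (j + 1))) _ hd
      refine ⟨k, ?_⟩
      have e : cokernel.π (F.map (D.p (j + 2)))
          (kernel.ι (F.map (D.m (j + 1))) k) = c := by
        rw [hk, map_sub, hy, π_apply_eq_zero]; exact sub_zero _
      exact e
  · -- exactness at K j
    intro j
    rw [ShortComplex.ab_exact_iff]
    intro k hk
    have hk' : cokernel.π (F.map (D.p (j + 1))) (kernel.ι (F.map (D.m j)) k) = 0 := hk
    obtain ⟨x, hx⟩ := exists_of_π_eq_zero (F.map (D.p (j + 1))) _ hk'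
    have hdx : F.map (D.d j) x = 0 := by
      have e : (F.map (D.p (j + 1)) ≫ F.map (D.m j)) x = 0 := by
        have e2 : F.map (D.m j) (F.map (D.p (j + 1)) x) = 0 := by
          rw [hx]
          exact kι_apply_eq_zero (F.map (D.m j)) k
        exact e2
      rw [← F.map_comp] at e
      exact e
    obtain ⟨z, hz⟩ := exists_kernel_lift (F.map (D.d j)) x hdx
    refine ⟨cokernel.π (l F D j) z, ?_⟩
    apply kι_injective (F.map (D.m j))
    have e : (cokernel.π (l F D j) ≫ conn F D j ≫ kernel.ι (F.map (D.m j))) z =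
        kernel.ι (F.map (D.m j)) k := by
      have c1 : (cokernel.π (l F D j) ≫ conn F D j) z = toK F D j z := by rw [hconn j]
      have c2 : (toK F D j ≫ kernel.ι (F.map (D.m j))) z =
          (kernel.ι (F.map (D.d j)) ≫ F.map (D.p (j + 1))) z := by rw [htoK j]; rfl
      have e2 : F.map (D.p (j + 1)) (kernel.ι (F.map (D.d j)) z) =
          kernel.ι (F.map (D.m j)) k := by
        rw [hz]; exact hx
      exact (congrArg (fun t => kernel.ι (F.map (D.m j)) t) c1).trans (c2.trans e2)
    exact e
  · -- exactness at H (j+1)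
    intro j
    rw [ShortComplex.ab_exact_iff]
    intro h hh
    obtain ⟨z, hz⟩ := π_surjective (l F D j) h
    rw [← hz] at hh
    have h0 : toK F D j z = 0 := by
      have e : (cokernel.π (l F D j) ≫ conn F D j) z = 0 := hh
      rw [hconn j] at e
      exact e
    have hp : F.map (D.p (j + 1)) (kernel.ι (F.map (D.d j)) z) = 0 := by
      have e : (kernel.ι (F.map (D.d j)) ≫ F.map (D.p (j + 1))) z = 0 := by
        rw [← htoK j]
        have e2 : kernel.ι (F.map (D.m j)) (toK F D j z) = 0 := by
          rw [h0]; exact map_zero _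
        exact e2
      exact e
    obtain ⟨s, hs⟩ := hex (j + 1) _ hp
    have hzs : zmap F D j s = z := by
      apply kι_injective (F.map (D.d j))
      have e : (zmap F D j ≫ kernel.ι (F.map (D.d j))) s =
          kernel.ι (F.map (D.d j)) z := by
        rw [hzι j]
        exact hs
      exact e
    refine ⟨cokernel.π (F.map (D.p (j + 2))) s, ?_⟩
    have e : (cokernel.π (F.map (D.p (j + 2))) ≫ toH F D (j + 1)) s = h := by
      rw [h3 j]
      have e2 : cokernel.π (l F D j) (zmap F D j s) = h := by
        rw [hzs]
        exact hz
      exact e2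
    exact e

end LeftFundamentalSeq
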